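/- Let Q be any group and let G = Q ≀ ℤ be the restricted wreath product, i.e., the semidirect product of ℤ acting on the restricted direct product ⊕_{n∈ℤ} Q by shifting indices. Then the subgroup K = ⊕_{n≥0} Q consisting of finitely supported functions vanishing at all negative indices is co-amenable in G. -/

import Mathlib

/-- The space ℓ∞(X) of bounded real-valued functions on `X`,
as a submodule of `X → ℝ`. -/
def BddFns (X : Type*) : Submodule ℝ (X → ℝ) where
  carrier := {f | ∃ C : ℝ, ∀ x, |f x| ≤ C}
  add_mem' := by
    rintro f g ⟨C, hC⟩ ⟨D, hD⟩
    exact ⟨C + D, fun x => (abs_add_le _ _).trans (add_le_add (hC x) (hD x))⟩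
  zero_mem' := ⟨0, fun x => by simp⟩
  smul_mem' := by
    rintro c f ⟨C, hC⟩
    exact ⟨|c| * C, fun x => by
      simp only [Pi.smul_apply, smul_eq_mul, abs_mul]
      exact mul_le_mul_of_nonneg_left (hC x) (abs_nonneg c)⟩

/-- Left translation of a function on a `G`-set: `(g · f)(x) = f (g⁻¹ • x)`. -/
def lshift {G X : Type*} [Group G] [MulAction G X] (g : G) (f : X → ℝ) : X → ℝ :=
  fun x => f (g⁻¹ • x)

lemma lshift_mem {G X : Type*} [Group G] [MulAction G X] (g : G) {f : X → ℝ}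
    (hf : f ∈ BddFns X) : lshift g f ∈ BddFns X := by
  obtain ⟨C, hC⟩ := hf
  exact ⟨C, fun x => hC _⟩

/-- A `G`-invariant mean on ℓ∞(X): a linear functional `m` with `m 1 = 1`,
`m f ≥ 0` for `f ≥ 0` pointwise, invariant under the `G`-action. -/
structure InvariantMean (G : Type*) (X : Type*) [Group G] [MulAction G X] where
  toFun : (BddFns X) →ₗ[ℝ] ℝ
  norm_one : toFun ⟨(fun _ => 1), ⟨1, fun _ => by norm_num⟩⟩ = 1
  nonneg : ∀ f : BddFns X, (∀ x, 0 ≤ (f : X → ℝ) x) → 0 ≤ toFun f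
  invariant : ∀ (g : G) (f : BddFns X),
    toFun ⟨lshift g (f : X → ℝ), lshift_mem g f.2⟩ = toFun f

/-- A subgroup `H ≤ G` is co-amenable in `G` if there is a `G`-invariant mean
on ℓ∞(G/H), where `G/H` is the left coset space. -/
def Subgroup.Coamenable {G : Type*} [Group G] (H : Subgroup G) : Prop :=
  Nonempty (InvariantMean G (G ⧸ H))

/-- A group is amenable if there is a left-translation-invariant mean on ℓ∞(G). -/
def AmenableGroup (G : Type*) [Group G] : Prop :=
  Nonempty (InvariantMean G G)

open Function

/-- The restricted direct product `⊕_{i ∈ I} Q`: functions `I → Q` equal to `1`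
outside a finite set, as a subgroup of `I → Q`. -/
def restrictedProd (I : Type*) (Q : Type*) [Group Q] : Subgroup (I → Q) where
  carrier := {f | (mulSupport f).Finite}
  mul_mem' := fun hf hg => ((hf.union hg).subset (mulSupport_mul _ _))
  one_mem' := by simp [Set.mem_setOf_eq, mulSupport_one]
  inv_mem' := fun hf => by simpa [Set.mem_setOf_eq, mulSupport_inv] using hf

/-- The shift by one on `⊕_{n ∈ ℤ} Q` : `(s f) n = f (n - 1)`. -/
def shiftAut (Q : Type*) [Group Q] :
    restrictedProd ℤ Q ≃* restrictedProd ℤ Q where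
  toFun f := ⟨fun n => (f : ℤ → Q) (n - 1), by
    have : (mulSupport fun n => (f : ℤ → Q) (n - 1)) ⊆ (fun n : ℤ => n + 1) '' mulSupport (f : ℤ → Q) := by
      intro n hn
      exact ⟨n - 1, hn, by ring⟩
    exact (f.2.image _).subset this⟩
  invFun f := ⟨fun n => (f : ℤ → Q) (n + 1), by
    have : (mulSupport fun n => (f : ℤ → Q) (n + 1)) ⊆ (fun n : ℤ => n - 1) '' mulSupport (f : ℤ → Q) := by
      intro n hn
      exact ⟨n + 1, hn, by ring⟩
    exact (f.2.image _).subset this⟩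
  left_inv f := by ext n; simp
  right_inv f := by ext n; simp
  map_mul' f g := by ext n; simp

/-- The action of `ℤ` on `⊕_{n ∈ ℤ} Q` by shifting indices: `(k · f)(n) = f (n - k)`. -/
def shiftHom (Q : Type*) [Group Q] :
    Multiplicative ℤ →* MulAut (restrictedProd ℤ Q) :=
  zpowersHom _ (shiftAut Q)

/-- The subgroup `⊕_{n ≥ 0} Q` of `⊕_{n ∈ ℤ} Q`. -/
def nonnegPart (Q : Type*) [Group Q] : Subgroup (restrictedProd ℤ Q) where
  carrier := {f | ∀ n : ℤ, n < 0 → (f : ℤ → Q) n = 1}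
  mul_mem' := fun {f g} hf hg n hn => by
    simp [hf n hn, hg n hn]
  one_mem' := fun n _ => rfl
  inv_mem' := fun {f} hf n hn => by
    simp [hf n hn]
open Filter Topology in
private lemma exists_hyperlim {u : ℕ → ℝ} {C : ℝ} (h : ∀ n, |u n| ≤ C) :
    ∃ x : ℝ, Filter.Tendsto u (Filter.hyperfilter ℕ : Filter ℕ) (𝓝 x) := by
  obtain ⟨x, -, hx⟩ := (isCompact_Icc (a := -C) (b := C)).ultrafilter_le_nhds
    ((Filter.hyperfilter ℕ).map u) (by
      rw [le_principal_iff, Ultrafilter.coe_map, Filter.mem_map]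
      exact Filter.univ_mem' fun n => Set.mem_Icc.mpr (abs_le.mp (h n)))
  refine ⟨x, ?_⟩
  rwa [Filter.Tendsto, ← Ultrafilter.coe_map]

private lemma abs_sub_le_abs_add_abs (a b : ℝ) : |a - b| ≤ |a| + |b| := by
  have := abs_add_le a (-b)
  rw [abs_neg] at this
  calc |a - b| = |a + -b| := by ring_nf
    _ ≤ |a| + |b| := this

private lemma sum_shift_step (F : ℤ → ℝ) (m : ℤ) (n : ℕ) :
    ∑ j ∈ Finset.range n, F ((j : ℤ) + (m + 1)) =
      (∑ j ∈ Finset.range n, F ((j : ℤ) + m)) + F ((n : ℤ) + m) - F m := by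
  have h1 := Finset.sum_range_succ' (fun j : ℕ => F ((j : ℤ) + m)) n
  have h2 := Finset.sum_range_succ (fun j : ℕ => F ((j : ℤ) + m)) n
  have e : ∀ j : ℕ, F ((j : ℤ) + (m + 1)) = F (((j + 1 : ℕ) : ℤ) + m) := fun j => by
    congr 1; push_cast; ring
  simp only [e]
  simp only [Nat.cast_zero, zero_add] at h1
  linarith [h1, h2]

private lemma sum_shift_bound (F : ℤ → ℝ) (C : ℝ) (hC : ∀ j, |F j| ≤ C) (m : ℤ) :
    ∀ n : ℕ, |(∑ j ∈ Finset.range n, F ((j : ℤ) + m)) - ∑ j ∈ Finset.range n, F ((j : ℤ) + 0)| ≤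
      2 * |(m : ℝ)| * C := by
  have hCnn : 0 ≤ C := (abs_nonneg _).trans (hC 0)
  induction m using Int.induction_on with
  | zero => intro n; simp
  | succ i ih =>
    intro n
    have hs := sum_shift_step F (i : ℤ) n
    have h1 := ih n
    have hc1 := hC ((n : ℤ) + i)
    have hc2 := hC (i : ℤ)
    have habs : |(((i : ℤ) + 1 : ℤ) : ℝ)| = (i : ℝ) + 1 := by
      push_cast
      rw [abs_of_nonneg (by positivity)]
    have habs2 : |((i : ℤ) : ℝ)| = (i : ℝ) := by
      push_cast
      exact abs_of_nonneg (Nat.cast_nonneg i)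
    rw [habs]
    rw [habs2] at h1
    have key : (∑ j ∈ Finset.range n, F ((j : ℤ) + ((i : ℤ) + 1))) -
        ∑ j ∈ Finset.range n, F ((j : ℤ) + 0) =
        ((∑ j ∈ Finset.range n, F ((j : ℤ) + (i : ℤ))) - ∑ j ∈ Finset.range n, F ((j : ℤ) + 0))
          + (F ((n : ℤ) + i) - F (i : ℤ)) := by linarith [hs]
    rw [key]
    have htri := abs_add_le ((∑ j ∈ Finset.range n, F ((j : ℤ) + (i : ℤ))) -
        ∑ j ∈ Finset.range n, F ((j : ℤ) + 0)) (F ((n : ℤ) + i) - F (i : ℤ))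
    have hb2 := abs_sub_le_abs_add_abs (F ((n : ℤ) + i)) (F (i : ℤ))
    nlinarith
  | pred i ih =>
    intro n
    have hs := sum_shift_step F (-(i : ℤ) - 1) n
    have he : (-(i : ℤ) - 1) + 1 = -(i : ℤ) := by ring
    rw [he] at hs
    have h1 := ih n
    have hc1 := hC ((n : ℤ) + (-(i : ℤ) - 1))
    have hc2 := hC (-(i : ℤ) - 1)
    have habs : |((-(i : ℤ) - 1 : ℤ) : ℝ)| = (i : ℝ) + 1 := by
      push_cast
      rw [abs_of_nonpos (by have := Nat.cast_nonneg (α := ℝ) i; linarith)]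
      ring
    have habs2 : |((-(i : ℤ) : ℤ) : ℝ)| = (i : ℝ) := by
      push_cast
      rw [abs_neg]
      exact abs_of_nonneg (Nat.cast_nonneg i)
    rw [habs]
    rw [habs2] at h1
    have key : (∑ j ∈ Finset.range n, F ((j : ℤ) + (-(i : ℤ) - 1))) -
        ∑ j ∈ Finset.range n, F ((j : ℤ) + 0) =
        ((∑ j ∈ Finset.range n, F ((j : ℤ) + (-(i : ℤ)))) - ∑ j ∈ Finset.range n, F ((j : ℤ) + 0))
          - (F ((n : ℤ) + (-(i : ℤ) - 1)) - F (-(i : ℤ) - 1)) := by linarith [hs]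
    rw [key]
    have htri := abs_sub_le_abs_add_abs
      ((∑ j ∈ Finset.range n, F ((j : ℤ) + (-(i : ℤ)))) - ∑ j ∈ Finset.range n, F ((j : ℤ) + 0))
      (F ((n : ℤ) + (-(i : ℤ) - 1)) - F (-(i : ℤ) - 1))
    have hb2 := abs_sub_le_abs_add_abs (F ((n : ℤ) + (-(i : ℤ) - 1))) (F (-(i : ℤ) - 1))
    nlinarith

private lemma tail_sum_const (u v : ℕ → ℝ) (j0 : ℕ) (h : ∀ j, j0 ≤ j → u j = v j)
    {n : ℕ} (hn : j0 ≤ n) :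
    (∑ j ∈ Finset.range n, u j) - ∑ j ∈ Finset.range n, v j =
      ∑ j ∈ Finset.range j0, (u j - v j) := by
  rw [← Finset.sum_sub_distrib]
  refine (Finset.sum_subset (Finset.range_subset_range.mpr hn) fun x _ hx => ?_).symm
  rw [h x (le_of_not_gt fun hc => hx (Finset.mem_range.mpr hc)), sub_self]

open Filter Topology in
theorem invariantMean_of_tail {G X : Type*} [Group G] [MulAction G X] (p : ℤ → X)
    (hp : ∀ g : G, ∃ k : ℤ, ∃ j0 : ℕ, ∀ j : ℕ, j0 ≤ j → g⁻¹ • p (j : ℤ) = p ((j : ℤ) + k)) :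
    Nonempty (InvariantMean G X) := by
  classical
  have hU : (Filter.hyperfilter ℕ : Filter ℕ) ≤ atTop := Nat.hyperfilter_le_atTop
  let A : (X → ℝ) → ℕ → ℝ := fun f n => (∑ j ∈ Finset.range n, f (p (j : ℤ))) / n
  have Abound : ∀ (f : X → ℝ) (C : ℝ), (∀ x, |f x| ≤ C) → ∀ n, |A f n| ≤ max C 0 := by
    intro f C hC n
    rcases Nat.eq_zero_or_pos n with rfl | hn
    · simp [A, le_max_iff]
    · have h1 : |∑ j ∈ Finset.range n, f (p (j : ℤ))| ≤ ∑ j ∈ Finset.range n, |f (p (j : ℤ))| :=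
        Finset.abs_sum_le_sum_abs _ _
      have h2 : ∑ j ∈ Finset.range n, |f (p (j : ℤ))| ≤ ∑ _j ∈ Finset.range n, max C 0 :=
        Finset.sum_le_sum fun j _ => le_max_of_le_left (hC _)
      have hn' : (0 : ℝ) < n := by positivity
      show |(∑ j ∈ Finset.range n, f (p (j : ℤ))) / n| ≤ max C 0
      rw [abs_div, abs_of_nonneg (le_of_lt hn'), div_le_iff₀ hn']
      calc |∑ j ∈ Finset.range n, f (p (j : ℤ))| ≤ ∑ _j ∈ Finset.range n, max C 0 := h1.trans h2
        _ = n * max C 0 := by simp [Finset.sum_const, nsmul_eq_mul]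
        _ = max C 0 * n := mul_comm _ _
  have hex : ∀ f : BddFns X, ∃ x,
      Tendsto (A (f : X → ℝ)) (Filter.hyperfilter ℕ : Filter ℕ) (𝓝 x) := by
    intro f
    obtain ⟨C, hC⟩ := f.2
    exact exists_hyperlim (Abound _ C hC)
  choose L hL using hex
  have hadd : ∀ f g : BddFns X, L (f + g) = L f + L g := by
    intro f g
    have h1 : A ((f + g : BddFns X) : X → ℝ) = fun n => A (f : X → ℝ) n + A (g : X → ℝ) n := by
      funext n
      show (∑ j ∈ Finset.range n, ((f : X → ℝ) (p j) + (g : X → ℝ) (p j))) / n = _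
      rw [Finset.sum_add_distrib, add_div]
    exact tendsto_nhds_unique (h1 ▸ hL (f + g)) ((hL f).add (hL g))
  have hsmul : ∀ (c : ℝ) (f : BddFns X), L (c • f) = c * L f := by
    intro c f
    have h1 : A ((c • f : BddFns X) : X → ℝ) = fun n => c * A (f : X → ℝ) n := by
      funext n
      show (∑ j ∈ Finset.range n, c * (f : X → ℝ) (p j)) / n = _
      rw [← Finset.mul_sum, mul_div_assoc]
    exact tendsto_nhds_unique (h1 ▸ hL (c • f)) ((hL f).const_mul c)
  refine ⟨{ toFun := { toFun := L, map_add' := hadd, map_smul' := hsmul },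
            norm_one := ?_, nonneg := ?_, invariant := ?_ }⟩
  · -- norm_one
    have heq : A (fun _ => (1 : ℝ)) =ᶠ[(Filter.hyperfilter ℕ : Filter ℕ)] fun _ => (1 : ℝ) := by
      refine hU ?_
      filter_upwards [eventually_ge_atTop 1] with n hn
      have hne : (n : ℝ) ≠ 0 := by positivity
      show (∑ _j ∈ Finset.range n, (1 : ℝ)) / n = 1
      simp [hne]
    exact tendsto_nhds_unique (hL _) (Tendsto.congr' heq.symm tendsto_const_nhds)
  · -- nonneg
    intro f hf
    refine ge_of_tendsto' (hL f) fun n => ?_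
    exact div_nonneg (Finset.sum_nonneg fun j _ => hf _) (Nat.cast_nonneg n)
  · -- invariant
    intro g f
    obtain ⟨C0, hC0⟩ := f.2
    set C : ℝ := max C0 0 with hCdef
    have hC : ∀ x, |(f : X → ℝ) x| ≤ C := fun x => le_max_of_le_left (hC0 x)
    obtain ⟨k, j0, hk⟩ := hp g
    set Fz : ℤ → ℝ := fun m => (f : X → ℝ) (p m) with hFz
    have hCz : ∀ j, |Fz j| ≤ C := fun j => hC _
    set u : ℕ → ℝ := fun j => lshift g (f : X → ℝ) (p (j : ℤ)) with hu
    set v : ℕ → ℝ := fun j => Fz ((j : ℤ) + k) with hv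
    have huv : ∀ j, j0 ≤ j → u j = v j := by
      intro j hj
      show (f : X → ℝ) (g⁻¹ • p (j : ℤ)) = Fz ((j : ℤ) + k)
      rw [hk j hj]
    set E : ℝ := ∑ j ∈ Finset.range j0, (u j - v j) with hE
    set D : ℝ := |E| + 2 * |(k : ℝ)| * C with hD
    have hbound : ∀ n : ℕ, j0 ≤ n →
        |(∑ j ∈ Finset.range n, u j) - ∑ j ∈ Finset.range n, Fz (j : ℤ)| ≤ D := by
      intro n hn
      have h1 : (∑ j ∈ Finset.range n, u j) - ∑ j ∈ Finset.range n, v j = E :=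
        tail_sum_const u v j0 huv hn
      have h2 := sum_shift_bound Fz C hCz k n
      have h3 : ∑ j ∈ Finset.range n, Fz ((j : ℤ) + 0) = ∑ j ∈ Finset.range n, Fz (j : ℤ) := by
        refine Finset.sum_congr rfl fun j _ => ?_
        norm_num
      rw [h3] at h2
      have h4 : (∑ j ∈ Finset.range n, u j) - ∑ j ∈ Finset.range n, Fz (j : ℤ) =
          E + ((∑ j ∈ Finset.range n, v j) - ∑ j ∈ Finset.range n, Fz (j : ℤ)) := by
        linarith [h1]
      rw [h4]
      have htri := abs_add_le E ((∑ j ∈ Finset.range n, v j) - ∑ j ∈ Finset.range n, Fz (j : ℤ))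
      have : (∑ j ∈ Finset.range n, v j) = ∑ j ∈ Finset.range n, Fz ((j : ℤ) + k) := rfl
      rw [this] at htri
      calc |E + ((∑ j ∈ Finset.range n, v j) - ∑ j ∈ Finset.range n, Fz (j : ℤ))| ≤
          |E| + |(∑ j ∈ Finset.range n, Fz ((j : ℤ) + k)) - ∑ j ∈ Finset.range n, Fz (j : ℤ)| :=
            htri
        _ ≤ |E| + 2 * |(k : ℝ)| * C := by linarith [h2]
        _ = D := rfl
    have hdiff : Tendsto (fun n => A (lshift g (f : X → ℝ)) n - A (f : X → ℝ) n)
        atTop (𝓝 0) := by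
      refine squeeze_zero_norm' ?_ (tendsto_const_div_atTop_nhds_zero_nat D)
      filter_upwards [eventually_ge_atTop j0] with n hn
      rcases Nat.eq_zero_or_pos n with rfl | hpos
      · show ‖(0:ℝ)/(0:ℕ) - (0:ℝ)/(0:ℕ)‖ ≤ D / (0:ℕ)
        simp
      · have hn' : (0 : ℝ) < n := by positivity
        have : A (lshift g (f : X → ℝ)) n - A (f : X → ℝ) n =
            ((∑ j ∈ Finset.range n, u j) - ∑ j ∈ Finset.range n, Fz (j : ℤ)) / n := by
          show (∑ j ∈ Finset.range n, u j) / (n : ℝ) -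
              (∑ j ∈ Finset.range n, Fz (j : ℤ)) / (n : ℝ) = _
          rw [div_sub_div_same]
        rw [Real.norm_eq_abs, this, abs_div, abs_of_nonneg (le_of_lt hn')]
        gcongr
        exact hbound n hn
    have hdiffU : Tendsto (fun n => A (lshift g (f : X → ℝ)) n - A (f : X → ℝ) n)
        (Filter.hyperfilter ℕ : Filter ℕ) (𝓝 0) := hdiff.mono_left hU
    have hsub := (hL ⟨lshift g (f : X → ℝ), lshift_mem g f.2⟩).sub (hL f)
    have h0 : L ⟨lshift g (f : X → ℝ), lshift_mem g f.2⟩ - L f = 0 :=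
      tendsto_nhds_unique hsub hdiffU
    show L ⟨lshift g (f : X → ℝ), lshift_mem g f.2⟩ = L f
    linarith [h0]

private lemma shiftAut_zpow_apply (Q : Type*) [Group Q] (m : ℤ) (a : restrictedProd ℤ Q)
    (n : ℤ) :
    (((shiftAut Q ^ m : MulAut (restrictedProd ℤ Q))) a : ℤ → Q) n = (a : ℤ → Q) (n - m) := by
  induction m using Int.induction_on generalizing a n with
  | zero => simp
  | succ i ih =>
    rw [zpow_add_one]
    show ((shiftAut Q ^ (i : ℤ)) (shiftAut Q a) : ℤ → Q) n = _
    rw [ih]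
    show (a : ℤ → Q) (n - i - 1) = _
    congr 1; ring
  | pred i ih =>
    have he : -(i : ℤ) - 1 = -(i : ℤ) - 1 := rfl
    rw [show (-(i : ℤ) - 1) = (-(i : ℤ)) - 1 from rfl, zpow_sub_one]
    show ((shiftAut Q ^ (-(i : ℤ))) ((shiftAut Q)⁻¹ a) : ℤ → Q) n = _
    rw [ih]
    show (a : ℤ → Q) (n - -(i : ℤ) + 1) = _
    congr 1; ring
/-- In the restricted wreath product `G = Q ≀ ℤ = (⊕_{n ∈ ℤ} Q) ⋊ ℤ`, the subgroup
`K = ⊕_{n ≥ 0} Q` is co-amenable. -/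
theorem wreath_nonnegPart_coamenable (Q : Type*) [Group Q] :
    ((nonnegPart Q).map
      (SemidirectProduct.inl :
        restrictedProd ℤ Q →* restrictedProd ℤ Q ⋊[shiftHom Q] Multiplicative ℤ)).Coamenable := by
  set H := (nonnegPart Q).map
      (SemidirectProduct.inl :
        restrictedProd ℤ Q →* restrictedProd ℤ Q ⋊[shiftHom Q] Multiplicative ℤ) with hHdef
  refine invariantMean_of_tail
    (fun j : ℤ =>
      (QuotientGroup.mk (SemidirectProduct.inr (Multiplicative.ofAdd (-j))) :
        (restrictedProd ℤ Q ⋊[shiftHom Q] Multiplicative ℤ) ⧸ H)) ?_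
  intro g
  refine ⟨Multiplicative.toAdd g.right, ?_⟩
  obtain ⟨b, hb⟩ := (g.left).2.bddBelow
  refine ⟨(-b).toNat, fun j hj => ?_⟩
  set k : ℤ := Multiplicative.toAdd g.right with hkdef
  have hsupp : ∀ m : ℤ, m < -(((-b).toNat : ℕ) : ℤ) → (g.left : ℤ → Q) m = 1 := by
    intro m hm
    by_contra hne
    have hmem : m ∈ Function.mulSupport (g.left : ℤ → Q) := hne
    have h1 := hb hmem
    have h2 : -b ≤ (((-b).toNat : ℕ) : ℤ) := Int.self_le_toNat _
    omega
  have hrfl : g⁻¹ • (QuotientGroup.mk (SemidirectProduct.inr (Multiplicative.ofAdd (-(j : ℤ)))) :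
      (restrictedProd ℤ Q ⋊[shiftHom Q] Multiplicative ℤ) ⧸ H) =
      QuotientGroup.mk (g⁻¹ * SemidirectProduct.inr (Multiplicative.ofAdd (-(j : ℤ)))) := rfl
  show g⁻¹ • (QuotientGroup.mk (SemidirectProduct.inr (Multiplicative.ofAdd (-(j : ℤ)))) :
      (restrictedProd ℤ Q ⋊[shiftHom Q] Multiplicative ℤ) ⧸ H) =
      QuotientGroup.mk (SemidirectProduct.inr (Multiplicative.ofAdd (-((j : ℤ) + k))))
  rw [hrfl, QuotientGroup.eq]
  have key : (g⁻¹ * SemidirectProduct.inr (Multiplicative.ofAdd (-(j : ℤ))))⁻¹ *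
      SemidirectProduct.inr (Multiplicative.ofAdd (-((j : ℤ) + k))) =
      SemidirectProduct.inl ((shiftAut Q ^ (j : ℤ)) g.left) := by
    have hr : g.right = Multiplicative.ofAdd k := (ofAdd_toAdd _).symm
    ext
    · simp only [SemidirectProduct.mul_left, SemidirectProduct.inv_left,
        SemidirectProduct.inv_right, SemidirectProduct.left_inr, SemidirectProduct.right_inr,
        SemidirectProduct.mul_right, SemidirectProduct.left_inl, map_one, mul_one, map_inv,
        inv_inv]
      have h1 : (g.right⁻¹ * Multiplicative.ofAdd (-(j : ℤ)))⁻¹ =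
          Multiplicative.ofAdd ((j : ℤ)) * g.right := by
        rw [mul_inv_rev, inv_inv]
        congr 1
        rw [← ofAdd_neg, neg_neg]
      rw [← map_inv, ← map_inv, h1, ← MulAut.mul_apply, ← map_mul, mul_inv_cancel_right]
      rfl
    · simp only [SemidirectProduct.mul_right, SemidirectProduct.inv_right,
        SemidirectProduct.right_inr, SemidirectProduct.right_inl, mul_inv_rev, inv_inv]
      rw [hr]
      have hinj : ∀ x y : Multiplicative ℤ, Multiplicative.toAdd x = Multiplicative.toAdd y →
          x = y := fun x y h => Multiplicative.toAdd.injective h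
      apply hinj
      simp only [toAdd_mul, toAdd_inv, toAdd_ofAdd, toAdd_one]
      ring
  rw [key, hHdef]
  refine ⟨(shiftAut Q ^ (j : ℤ)) g.left, ?_, rfl⟩
  intro n hn
  rw [shiftAut_zpow_apply]
  refine hsupp _ ?_
  omega
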